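/- Let ỹ = ((α+x) mod 2^n) XOR ((β+x) mod 2^n) XOR α XOR β with α, β, x independent uniform n-bit integers. Then the probability that the i-th bit of ỹ equals 0 satisfies q_0 = 1, q_i = (3/4)q_{i−1} + (1/2)(1 − q_{i−1}), with closed form q_i = 2/3 + 1/(3·4^i). -/

import Mathlib

private lemma sq6 (K : ℕ) : 6 * ∑ r ∈ Finset.range (K+1), r^2 = K*(K+1)*(2*K+1) := by
  induction K with
  | zero => simp
  | succ K ih =>
    rw [Finset.sum_range_succ, Nat.mul_add, ih]
    ring

private lemma sqS (K : ℕ) : 3 * ∑ r ∈ Finset.range K, (r*r + (K-r)*(K-r)) = 2*K^3 + K := by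
  cases K with
  | zero => simp
  | succ K =>
    have h1 : ∑ r ∈ Finset.range (K+1), ((K+1)-r)*((K+1)-r)
        = ∑ r ∈ Finset.range (K+1), (r+1)*(r+1) := by
      rw [← Finset.sum_range_reflect]
      apply Finset.sum_congr rfl
      intro r hr
      simp only [Finset.mem_range] at hr
      congr 1 <;> omega
    rw [Finset.sum_add_distrib, h1]
    have h2 : ∑ r ∈ Finset.range (K+1+1), r^2 = (∑ r ∈ Finset.range (K+1), (r+1)^2) + 0^2 :=
      Finset.sum_range_succ' _ _
    have h3 : ∑ r ∈ Finset.range (K+1), (r+1)*(r+1) = ∑ r ∈ Finset.range (K+1), (r+1)^2 := by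
      simp [pow_two]
    rw [h3]
    have hA' : ∑ r ∈ Finset.range (K+1), r*r = ∑ r ∈ Finset.range (K+1), r^2 := by
      simp [pow_two]
    rw [hA']
    have hA := sq6 K
    have hB := sq6 (K+1)
    have hpoly : K*(K+1)*(2*K+1) + (K+1)*(K+1+1)*(2*(K+1)+1) = 2*(2*(K+1)^3 + (K+1)) := by
      ring
    omega

private lemma sum_period (K M : ℕ) (g : ℕ → ℕ) :
    ∑ a ∈ Finset.range (M*K), g (a % K) = M * ∑ r ∈ Finset.range K, g r := by
  induction M with
  | zero => simp
  | succ M ih =>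
    have h : (M+1)*K = M*K + K := by ring
    rw [h, Finset.sum_range_add, ih]
    have h2 : ∑ a ∈ Finset.range K, g ((M*K + a) % K) = ∑ r ∈ Finset.range K, g r := by
      apply Finset.sum_congr rfl
      intro r hr
      simp only [Finset.mem_range] at hr
      rw [Nat.add_comm, Nat.add_mul_mod_self_right, Nat.mod_eq_of_lt hr]
    rw [h2]
    ring

private lemma filter_card_period (K M : ℕ) (p : ℕ → Prop) [DecidablePred p]
    (hp : ∀ a, p a ↔ p (a % K)) :
    (Finset.filter p (Finset.range (M*K))).card = M * (Finset.filter p (Finset.range K)).card := by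
  rw [Finset.card_filter, Finset.card_filter]
  calc ∑ a ∈ Finset.range (M*K), (if p a then 1 else 0)
      = ∑ a ∈ Finset.range (M*K), (if p (a % K) then 1 else 0) := by
        apply Finset.sum_congr rfl; intro a _; exact if_congr (hp a) rfl rfl
    _ = M * ∑ r ∈ Finset.range K, (if p r then 1 else 0) :=
        sum_period K M (fun r => if p r then 1 else 0)

private lemma testBit_add_carry (a b i : ℕ) :
    (a+b).testBit i =
      ((a.testBit i).xor ((b.testBit i).xor (decide (2^i ≤ a % 2^i + b % 2^i)))) := by
  have h2 : 0 < 2^i := Nat.pow_pos (by norm_num)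
  have key : (a+b)/2^i = a/2^i + b/2^i + (a % 2^i + b % 2^i)/2^i := by
    conv_lhs => rw [← Nat.div_add_mod a (2^i), ← Nat.div_add_mod b (2^i)]
    rw [show 2^i*(a/2^i) + a%2^i + (2^i*(b/2^i) + b%2^i)
        = (a%2^i + b%2^i) + (a/2^i + b/2^i)*2^i by ring]
    rw [Nat.add_mul_div_right _ _ h2]
    ring
  have hma : a % 2^i < 2^i := Nat.mod_lt _ h2
  have hmb : b % 2^i < 2^i := Nat.mod_lt _ h2
  have hc : (a % 2^i + b % 2^i)/2^i = if 2^i ≤ a % 2^i + b % 2^i then 1 else 0 := by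
    split
    · exact Nat.div_eq_of_lt_le (by omega) (by omega)
    · exact Nat.div_eq_of_lt (by omega)
  simp only [Nat.testBit_eq_decide_div_mod_eq, key, hc]
  rcases Nat.mod_two_eq_zero_or_one (a / 2^i) with h1 | h1 <;>
    rcases Nat.mod_two_eq_zero_or_one (b / 2^i) with h2 | h2 <;>
    by_cases h3 : 2^i ≤ a % 2^i + b % 2^i <;>
    simp [h1, h2, h3, Nat.add_mod, Nat.add_mul_mod_self_left]

private lemma cond_iff (n i a b x : ℕ) (hi : i < n) :
    (((((a + x) % 2^n) ^^^ ((b + x) % 2^n)) ^^^ a ^^^ b).testBit i = false) ↔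
    ((2^i ≤ a % 2^i + x % 2^i) ↔ (2^i ≤ b % 2^i + x % 2^i)) := by
  have h : (((((a + x) % 2^n) ^^^ ((b + x) % 2^n)) ^^^ a ^^^ b).testBit i)
      = ((decide (2^i ≤ a % 2^i + x % 2^i)).xor (decide (2^i ≤ b % 2^i + x % 2^i))) := by
    simp only [Nat.testBit_xor, Nat.testBit_mod_two_pow, hi, decide_true, Bool.true_and,
      testBit_add_carry]
    generalize a.testBit i = A
    generalize b.testBit i = B
    generalize x.testBit i = X
    generalize decide (2^i ≤ a % 2^i + x % 2^i) = c1
    generalize decide (2^i ≤ b % 2^i + x % 2^i) = c2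
    cases A <;> cases B <;> cases X <;> cases c1 <;> cases c2 <;> rfl
  rw [h]
  constructor
  · intro he
    cases hd1 : decide (2^i ≤ a % 2^i + x % 2^i) <;>
      cases hd2 : decide (2^i ≤ b % 2^i + x % 2^i) <;>
      simp_all <;> omega
  · intro hi2
    have h2 : decide (2^i ≤ a % 2^i + x % 2^i) = decide (2^i ≤ b % 2^i + x % 2^i) := by
      simp [decide_eq_decide, hi2]
    rw [h2, Bool.xor_self]

private lemma f_count (n i x : ℕ) (hi : i ≤ n) :
    (Finset.filter (fun a => 2^i ≤ a % 2^i + x % 2^i) (Finset.range (2^n))).card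
      = 2^(n-i) * (x % 2^i) := by
  have hK : (0:ℕ) < 2^i := Nat.pow_pos (by norm_num)
  have hxK : x % 2^i < 2^i := Nat.mod_lt _ hK
  have hN : 2^n = 2^(n-i) * 2^i := by rw [← pow_add]; congr 1; omega
  rw [hN, filter_card_period (2^i) (2^(n-i)) _ (by intro a; rw [Nat.mod_mod_of_dvd _ dvd_rfl])]
  congr 1
  have h1 : Finset.filter (fun a => 2^i ≤ a % 2^i + x % 2^i) (Finset.range (2^i))
      = Finset.filter (fun a => 2^i - x % 2^i ≤ a) (Finset.range (2^i)) := by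
    apply Finset.filter_congr
    intro a ha
    simp only [Finset.mem_range] at ha
    rw [Nat.mod_eq_of_lt ha]
    constructor <;> intro <;> omega
  rw [h1, Finset.range_eq_Ico, Finset.Ico_filter_le, Nat.card_Ico]
  omega

private lemma pair_count {α : Type*} (s : Finset α) (p q : α → Prop)
    [DecidablePred p] [DecidablePred q] (hpq : ∀ a, p a ↔ q a) :
    ∑ a ∈ s, ∑ b ∈ s, (if (p a ↔ q b) then 1 else 0)
      = (s.filter p).card * (s.filter p).card
        + (s.filter (fun a => ¬ p a)).card * (s.filter (fun a => ¬ p a)).card := by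
  have inner : ∀ a, (∑ b ∈ s, if (p a ↔ q b) then 1 else 0)
      = if p a then (s.filter p).card else (s.filter (fun a => ¬ p a)).card := by
    intro a
    by_cases h : p a
    · rw [if_pos h, Finset.card_filter]
      apply Finset.sum_congr rfl
      intro b _
      exact if_congr (by rw [← hpq b]; tauto) rfl rfl
    · rw [if_neg h, Finset.card_filter]
      apply Finset.sum_congr rfl
      intro b _
      exact if_congr (by rw [← hpq b]; tauto) rfl rfl
  rw [Finset.sum_congr rfl (fun a _ => inner a), Finset.sum_ite, Finset.sum_const,
    Finset.sum_const, smul_eq_mul, smul_eq_mul, mul_comm, mul_comm ((s.filter _).card)]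

private lemma main_count (n i : ℕ) (hi : i < n) :
    3 * (((Finset.range (2^n)) ×ˢ (Finset.range (2^n)) ×ˢ (Finset.range (2^n))).filter
            (fun t =>
              (((((t.1 + t.2.2) % 2^n) ^^^ ((t.2.1 + t.2.2) % 2^n)) ^^^ t.1 ^^^ t.2.1).testBit i)
                = false)).card
      = 2 * (2^n)^3 + (2^(n-i))^3 * 2^i := by
  have hK : (0:ℕ) < 2^i := Nat.pow_pos (by norm_num)
  set K := 2^i with hKdef
  set D := 2^(n-i) with hDdef
  have hN : 2^n = D*K := by rw [hDdef, hKdef, ← pow_add]; congr 1; omega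
  have hfilter : (((Finset.range (2^n)) ×ˢ (Finset.range (2^n)) ×ˢ (Finset.range (2^n))).filter
            (fun t =>
              (((((t.1 + t.2.2) % 2^n) ^^^ ((t.2.1 + t.2.2) % 2^n)) ^^^ t.1 ^^^ t.2.1).testBit i)
                = false))
      = (((Finset.range (2^n)) ×ˢ (Finset.range (2^n)) ×ˢ (Finset.range (2^n))).filter
            (fun t => ((K ≤ t.1 % K + t.2.2 % K) ↔ (K ≤ t.2.1 % K + t.2.2 % K)))) := by
    apply Finset.filter_congr
    intro t _
    exact cond_iff n i t.1 t.2.1 t.2.2 hi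
  rw [hfilter, Finset.card_filter, Finset.sum_product]
  simp only [Finset.sum_product]
  have hswap : ∑ a ∈ Finset.range (2^n), ∑ b ∈ Finset.range (2^n), ∑ x ∈ Finset.range (2^n),
        (if (K ≤ a % K + x % K) ↔ (K ≤ b % K + x % K) then 1 else 0)
      = ∑ x ∈ Finset.range (2^n), ∑ a ∈ Finset.range (2^n), ∑ b ∈ Finset.range (2^n),
        (if (K ≤ a % K + x % K) ↔ (K ≤ b % K + x % K) then 1 else 0) := by
    rw [Finset.sum_congr rfl (fun a _ => Finset.sum_comm
      (f := fun b x => if (K ≤ a % K + x % K) ↔ (K ≤ b % K + x % K) then (1:ℕ) else 0))]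
    exact Finset.sum_comm
  rw [hswap]
  have hinner : ∀ x, ∑ a ∈ Finset.range (2^n), ∑ b ∈ Finset.range (2^n),
        (if (K ≤ a % K + x % K) ↔ (K ≤ b % K + x % K) then 1 else 0)
      = (D * (x % K)) * (D * (x % K)) + (D*K - D * (x % K)) * (D*K - D * (x % K)) := by
    intro x
    rw [pair_count (Finset.range (2^n)) (fun a => K ≤ a % K + x % K)
        (fun a => K ≤ a % K + x % K) (fun a => Iff.rfl)]
    have h1 : ((Finset.range (2^n)).filter (fun a => K ≤ a % K + x % K)).card = D * (x % K) :=
      f_count n i x (le_of_lt hi)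
    have h2 : ((Finset.range (2^n)).filter (fun a => ¬ (K ≤ a % K + x % K))).card
        = 2^n - D * (x % K) := by
      have h3 := Finset.card_filter_add_card_filter_not
        (s := Finset.range (2^n)) (p := fun a => K ≤ a % K + x % K)
      rw [h1] at h3
      simp only [Finset.card_range] at h3
      omega
    rw [h1, h2, hN]
  rw [Finset.sum_congr rfl (fun x _ => hinner x)]
  have hper : ∑ x ∈ Finset.range (2^n),
        ((D * (x % K)) * (D * (x % K)) + (D*K - D * (x % K)) * (D*K - D * (x % K)))
      = D * ∑ r ∈ Finset.range K,
        ((D * r) * (D * r) + (D*K - D * r) * (D*K - D * r)) := by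
    rw [hN]
    exact sum_period K D (fun r => (D * r) * (D * r) + (D*K - D * r) * (D*K - D * r))
  rw [hper]
  have hpt : ∀ r ∈ Finset.range K, (D * r) * (D * r) + (D*K - D * r) * (D*K - D * r)
      = D^2 * (r*r + (K-r)*(K-r)) := by
    intro r hr
    simp only [Finset.mem_range] at hr
    have h : D*K - D*r = D*(K-r) := by
      rw [Nat.mul_comm D K, Nat.mul_comm D r, ← Nat.sub_mul, Nat.mul_comm]
    rw [h]; ring
  have hsum : ∑ r ∈ Finset.range K, ((D * r) * (D * r) + (D*K - D * r) * (D*K - D * r))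
      = D^2 * ∑ r ∈ Finset.range K, (r*r + (K-r)*(K-r)) := by
    rw [Finset.mul_sum]
    exact Finset.sum_congr rfl hpt
  rw [hsum]
  have hS := sqS K
  calc 3 * (D * (D^2 * ∑ r ∈ Finset.range K, (r*r + (K-r)*(K-r))))
      = D^3 * (3 * ∑ r ∈ Finset.range K, (r*r + (K-r)*(K-r))) := by ring
    _ = D^3 * (2*K^3 + K) := by rw [hS]
    _ = 2 * (2^n)^3 + D^3 * K := by rw [hN]; ring

theorem stmt_15 (n : ℕ) (hn : 1 ≤ n) :
    ∀ q : ℕ → ℚ,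
      (∀ i, q i =
        (((((Finset.range (2^n)) ×ˢ (Finset.range (2^n)) ×ˢ (Finset.range (2^n))).filter
            (fun t =>
              (((((t.1 + t.2.2) % 2^n) ^^^ ((t.2.1 + t.2.2) % 2^n)) ^^^ t.1 ^^^ t.2.1).testBit i)
                = false)).card : ℚ) / ((2^n) * (2^n) * (2^n)))) →
      q 0 = 1 ∧
      (∀ i, i + 1 < n → q (i + 1) = 3/4 * q i + 1/2 * (1 - q i)) ∧
      (∀ i, i < n → q i = 2/3 + 1/(3 * 4^i)) := by
  intro q hq
  have closed : ∀ i, i < n → q i = 2/3 + 1/(3 * 4^i) := by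
    intro i hi
    rw [hq i]
    have hm := main_count n i hi
    have hc : (3:ℚ) * ((((Finset.range (2^n)) ×ˢ (Finset.range (2^n)) ×ˢ (Finset.range (2^n))).filter
            (fun t =>
              (((((t.1 + t.2.2) % 2^n) ^^^ ((t.2.1 + t.2.2) % 2^n)) ^^^ t.1 ^^^ t.2.1).testBit i)
                = false)).card : ℚ)
        = 2 * ((2:ℚ)^n)^3 + ((2:ℚ)^(n-i))^3 * 2^i := by
      exact_mod_cast congrArg (fun m : ℕ => (m : ℚ)) hm
    have hEF : (2:ℚ)^(n-i) * 2^i = 2^n := by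
      rw [← pow_add]; congr 1; omega
    have h4 : (4:ℚ)^i = 2^i * 2^i := by
      rw [show (4:ℚ) = 2*2 by norm_num, mul_pow]
    have hE : (2:ℚ)^i ≠ 0 := by positivity
    have hF : (2:ℚ)^(n-i) ≠ 0 := by positivity
    rw [← hEF] at hc ⊢
    rw [h4]
    have hcard : ((((Finset.range (2^n)) ×ˢ (Finset.range (2^n)) ×ˢ (Finset.range (2^n))).filter
            (fun t =>
              (((((t.1 + t.2.2) % 2^n) ^^^ ((t.2.1 + t.2.2) % 2^n)) ^^^ t.1 ^^^ t.2.1).testBit i)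
                = false)).card : ℚ)
        = (2 * ((2:ℚ)^(n-i) * 2^i)^3 + ((2:ℚ)^(n-i))^3 * 2^i) / 3 := by
      rw [eq_div_iff (by norm_num : (3:ℚ) ≠ 0), mul_comm]
      exact hc
    rw [hcard]
    field_simp
  refine ⟨?_, ?_, closed⟩
  · have h0 := closed 0 (by omega)
    rw [h0]; norm_num
  · intro i hi1
    rw [closed i (by omega), closed (i+1) hi1]
    have h4 : (4:ℚ)^(i+1) = 4^i * 4 := pow_succ 4 i
    have h4ne : (4:ℚ)^i ≠ 0 := by positivity
    rw [h4]
    field_simp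
    ring
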